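/- Theorem 3.2: For all l ∈ ℕ and n ≥ 1, the Schur parameter can be recovered from the orthogonal polynomials by γ_{l,n+l} = −s_l^{1/2} · s_{l+1}^{-1/2} · φ_n(0,l) · (k^{l+1}_1 · k^{l+1}_2 ⋯ k^{l+1}_{n-1}) / (k^l_1 · k^l_2 ⋯ k^l_n), where the empty product (for n = 1) in the numerator equals 1. -/

import Mathlib

open Polynomial Filter Finset

/-- The complementary quantity `d_{k,j} = (1 - |γ_{k,j}|²)^{1/2}`. -/
noncomputable def dd (γ : ℕ → ℕ → ℂ) (k j : ℕ) : ℝ :=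
  Real.sqrt (1 - ‖γ k j‖ ^ 2)

/-- The pair `(φ_n(·,l), φ♯_n(·,l))` of Szegő-type orthogonal polynomials attached to the
Schur parameters `γ` and the diagonal `s`, defined by the recurrences
`φ_n(X,l) = d_{l,n+l}⁻¹ (X φ_{n-1}(X,l+1) - γ_{l,n+l} φ♯_{n-1}(X,l))` and
`φ♯_n(X,l) = d_{l,n+l}⁻¹ (-conj(γ_{l,n+l}) X φ_{n-1}(X,l+1) + φ♯_{n-1}(X,l))`,
with `φ_0(X,l) = φ♯_0(X,l) = s_l^{-1/2}`. -/
noncomputable def phiPair (s : ℕ → ℝ) (γ : ℕ → ℕ → ℂ) : ℕ → ℕ → Polynomial ℂ × Polynomial ℂ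
  | 0, l => (Polynomial.C (((Real.sqrt (s l))⁻¹ : ℝ) : ℂ),
             Polynomial.C (((Real.sqrt (s l))⁻¹ : ℝ) : ℂ))
  | n + 1, l =>
      (Polynomial.C (((dd γ l (n + 1 + l))⁻¹ : ℝ) : ℂ) *
         (Polynomial.X * (phiPair s γ n (l + 1)).1 -
           Polynomial.C (γ l (n + 1 + l)) * (phiPair s γ n l).2),
       Polynomial.C (((dd γ l (n + 1 + l))⁻¹ : ℝ) : ℂ) *
         (-(Polynomial.C ((starRingEnd ℂ) (γ l (n + 1 + l))) * Polynomial.X *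
             (phiPair s γ n (l + 1)).1) +
           (phiPair s γ n l).2))

/-- The orthogonal polynomial `φ_n(X,l)`. -/
noncomputable def phi (s : ℕ → ℝ) (γ : ℕ → ℕ → ℂ) (n l : ℕ) : Polynomial ℂ :=
  (phiPair s γ n l).1

/-- The reversed polynomial `φ♯_n(X,l)`. -/
noncomputable def phiSharp (s : ℕ → ℝ) (γ : ℕ → ℕ → ℂ) (n l : ℕ) : Polynomial ℂ :=
  (phiPair s γ n l).2

/-- The determinant `D_{r,q} = (∏_{k=r}^q s_k) ∏_{r ≤ k < j ≤ q} d_{k,j}²` of the positive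
definite kernel associated with the parameters `γ`. -/
noncomputable def Ddet (s : ℕ → ℝ) (γ : ℕ → ℕ → ℂ) (r q : ℕ) : ℝ :=
  (∏ k ∈ Finset.Icc r q, s k) *
    ∏ k ∈ Finset.Icc r q, ∏ j ∈ Finset.Icc (k + 1) q, (dd γ k j) ^ 2

noncomputable def kap (s : ℕ → ℝ) (γ : ℕ → ℕ → ℂ) : ℕ → ℕ → ℝ
  | 0, l => (Real.sqrt (s l))⁻¹
  | n + 1, l => (dd γ l (n + 1 + l))⁻¹ * kap s γ n (l + 1)

lemma dd_pos {γ : ℕ → ℕ → ℂ} (hγ : ∀ k j, k < j → ‖γ k j‖ < 1) {k j : ℕ} (h : k < j) :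
    0 < dd γ k j := by
  have h1 := hγ k j h
  have h2 := norm_nonneg (γ k j)
  have : 0 < 1 - ‖γ k j‖ ^ 2 := by nlinarith
  exact Real.sqrt_pos.mpr this

lemma kap_pos {s : ℕ → ℝ} {γ : ℕ → ℕ → ℂ} (hs : ∀ l, 0 < s l)
    (hγ : ∀ k j, k < j → ‖γ k j‖ < 1) : ∀ n l, 0 < kap s γ n l := by
  intro n
  induction n with
  | zero => intro l; simp only [kap]; exact inv_pos.mpr (Real.sqrt_pos.mpr (hs l))
  | succ n ih =>
    intro l
    have h1 : 0 < dd γ l (n + 1 + l) := dd_pos hγ (by omega)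
    have := ih (l + 1)
    simp only [kap]
    exact mul_pos (inv_pos.mpr h1) (ih (l + 1))

lemma phi_deg_coeff (s : ℕ → ℝ) (γ : ℕ → ℕ → ℂ) : ∀ n l,
    (phi s γ n l).natDegree ≤ n ∧ (phiSharp s γ n l).natDegree ≤ n ∧
      (phi s γ n l).coeff n = ((kap s γ n l : ℝ) : ℂ) := by
  intro n
  induction n with
  | zero =>
    intro l
    refine ⟨?_, ?_, ?_⟩ <;> simp [phi, phiSharp, phiPair, kap]
  | succ n ih =>
    intro l
    obtain ⟨h1, h2, h3⟩ := ih (l + 1)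
    obtain ⟨h1', h2', h3'⟩ := ih l
    refine ⟨?_, ?_, ?_⟩
    · show (Polynomial.C (((dd γ l (n + 1 + l))⁻¹ : ℝ) : ℂ) *
         (Polynomial.X * phi s γ n (l + 1) -
           Polynomial.C (γ l (n + 1 + l)) * phiSharp s γ n l)).natDegree ≤ n + 1
      apply (natDegree_C_mul_le _ _).trans
      apply (natDegree_sub_le _ _).trans
      rw [max_le_iff]
      constructor
      · apply (natDegree_mul_le).trans
        simp only [natDegree_X]
        omega
      · apply (natDegree_mul_le).trans
        simp only [natDegree_C]
        omega
    · show (Polynomial.C (((dd γ l (n + 1 + l))⁻¹ : ℝ) : ℂ) *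
         (-(Polynomial.C ((starRingEnd ℂ) (γ l (n + 1 + l))) * Polynomial.X *
             phi s γ n (l + 1)) + phiSharp s γ n l)).natDegree ≤ n + 1
      apply (natDegree_C_mul_le _ _).trans
      apply (natDegree_add_le _ _).trans
      rw [max_le_iff, natDegree_neg]
      constructor
      · apply (natDegree_mul_le).trans
        have := natDegree_mul_le (p := Polynomial.C ((starRingEnd ℂ) (γ l (n + 1 + l))))
          (q := (Polynomial.X : Polynomial ℂ))
        simp only [natDegree_C, natDegree_X] at this
        omega
      · omega
    · show (Polynomial.C (((dd γ l (n + 1 + l))⁻¹ : ℝ) : ℂ) *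
         (Polynomial.X * phi s γ n (l + 1) -
           Polynomial.C (γ l (n + 1 + l)) * phiSharp s γ n l)).coeff (n + 1) = _
      rw [coeff_C_mul, coeff_sub, coeff_X_mul, coeff_C_mul,
        coeff_eq_zero_of_natDegree_lt (lt_of_le_of_lt h2' (Nat.lt_succ_self n)), h3]
      simp only [kap]
      push_cast
      ring

lemma phi_leadingCoeff (s : ℕ → ℝ) (γ : ℕ → ℕ → ℂ) (hs : ∀ l, 0 < s l)
    (hγ : ∀ k j, k < j → ‖γ k j‖ < 1) (n l : ℕ) :
    (phi s γ n l).leadingCoeff = ((kap s γ n l : ℝ) : ℂ) := by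
  obtain ⟨h1, _, h3⟩ := phi_deg_coeff s γ n l
  have hk : ((kap s γ n l : ℝ) : ℂ) ≠ 0 := by
    exact_mod_cast (kap_pos hs hγ n l).ne'
  have hdeg : (phi s γ n l).natDegree = n :=
    le_antisymm h1 (le_natDegree_of_ne_zero (h3 ▸ hk))
  rw [leadingCoeff, hdeg, h3]

lemma phiSharp_eval (s : ℕ → ℝ) (γ : ℕ → ℕ → ℂ) (n l : ℕ) :
    (phiSharp s γ n l).eval 0 =
      (((Real.sqrt (s l))⁻¹ * ∏ m ∈ Finset.Icc 1 n, (dd γ l (m + l))⁻¹ : ℝ) : ℂ) := by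
  induction n with
  | zero => simp [phiSharp, phiPair]
  | succ n ih =>
    show (Polynomial.C (((dd γ l (n + 1 + l))⁻¹ : ℝ) : ℂ) *
         (-(Polynomial.C ((starRingEnd ℂ) (γ l (n + 1 + l))) * Polynomial.X *
             phi s γ n (l + 1)) + phiSharp s γ n l)).eval 0 = _
    rw [Finset.prod_Icc_succ_top (by omega : 1 ≤ n + 1)]
    simp only [eval_mul, eval_add, eval_neg, eval_C, eval_X, mul_zero, zero_mul, neg_zero,
      zero_add, ih]
    push_cast
    ring

lemma phi_eval (s : ℕ → ℝ) (γ : ℕ → ℕ → ℂ) (n l : ℕ) :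
    (phi s γ (n + 1) l).eval 0 =
      -γ l (n + 1 + l) *
        (((Real.sqrt (s l))⁻¹ * ∏ m ∈ Finset.Icc 1 (n + 1), (dd γ l (m + l))⁻¹ : ℝ) : ℂ) := by
  show (Polynomial.C (((dd γ l (n + 1 + l))⁻¹ : ℝ) : ℂ) *
         (Polynomial.X * phi s γ n (l + 1) -
           Polynomial.C (γ l (n + 1 + l)) * phiSharp s γ n l)).eval 0 = _
  rw [Finset.prod_Icc_succ_top (by omega : 1 ≤ n + 1)]
  simp only [eval_mul, eval_sub, eval_C, eval_X, zero_mul, zero_sub, phiSharp_eval]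
  push_cast
  ring

lemma prod_kap (s : ℕ → ℝ) (γ : ℕ → ℕ → ℂ) (n l : ℕ) :
    ∏ m ∈ Finset.Icc 1 (n + 1), kap s γ m l =
      (Real.sqrt (s (l + 1)))⁻¹ * (∏ m ∈ Finset.Icc 1 (n + 1), (dd γ l (m + l))⁻¹) *
        ∏ m ∈ Finset.Icc 1 n, kap s γ m (l + 1) := by
  induction n with
  | zero => simp [kap]; ring
  | succ n ih =>
    rw [Finset.prod_Icc_succ_top (by omega : 1 ≤ n + 1 + 1),
      Finset.prod_Icc_succ_top (by omega : 1 ≤ n + 1 + 1) (f := fun m => (dd γ l (m + l))⁻¹),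
      Finset.prod_Icc_succ_top (by omega : 1 ≤ n + 1) (f := fun m => kap s γ m (l + 1)), ih]
    show _ * kap s γ (n + 1 + 1) l = _
    simp only [kap]
    ring

/-- Theorem 3.2: for all `l ∈ ℕ` and `n ≥ 1`, the Schur parameter can be recovered from the
orthogonal polynomials by
`γ_{l,n+l} = -s_l^{1/2} s_{l+1}^{-1/2} φ_n(0,l) (k^{l+1}_1 ⋯ k^{l+1}_{n-1}) / (k^l_1 ⋯ k^l_n)`,
where `k^l_m` is the leading coefficient of `φ_m(X,l)` and the empty product (for `n = 1`)
in the numerator equals `1`. -/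
theorem gamma_eq_of_phi_leadingCoeffs (s : ℕ → ℝ) (γ : ℕ → ℕ → ℂ)
    (hs : ∀ l, 0 < s l) (hγ : ∀ k j, k < j → ‖γ k j‖ < 1) (n l : ℕ) (hn : 1 ≤ n) :
    γ l (n + l) =
      -((Real.sqrt (s l) : ℝ) : ℂ) * (((Real.sqrt (s (l + 1)))⁻¹ : ℝ) : ℂ) *
        (phi s γ n l).eval 0 *
        (∏ m ∈ Finset.Icc 1 (n - 1), (phi s γ m (l + 1)).leadingCoeff) /
        (∏ m ∈ Finset.Icc 1 n, (phi s γ m l).leadingCoeff) := by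
  obtain ⟨m, rfl⟩ : ∃ m, n = m + 1 := ⟨n - 1, by omega⟩
  have hQ : ∏ m' ∈ Finset.Icc 1 (m + 1), (phi s γ m' l).leadingCoeff
      = ((∏ m' ∈ Finset.Icc 1 (m + 1), kap s γ m' l : ℝ) : ℂ) := by
    push_cast
    exact Finset.prod_congr rfl fun m' _ => phi_leadingCoeff s γ hs hγ m' l
  have hP : ∏ m' ∈ Finset.Icc 1 (m + 1 - 1), (phi s γ m' (l + 1)).leadingCoeff
      = ((∏ m' ∈ Finset.Icc 1 m, kap s γ m' (l + 1) : ℝ) : ℂ) := by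
    rw [Nat.add_sub_cancel]
    push_cast
    exact Finset.prod_congr rfl fun m' _ => phi_leadingCoeff s γ hs hγ m' (l + 1)
  have hQ0 : ((∏ m' ∈ Finset.Icc 1 (m + 1), kap s γ m' l : ℝ) : ℂ) ≠ 0 := by
    have : (0 : ℝ) < ∏ m' ∈ Finset.Icc 1 (m + 1), kap s γ m' l :=
      Finset.prod_pos fun m' _ => kap_pos hs hγ m' l
    exact_mod_cast this.ne'
  rw [hQ, hP, phi_eval, eq_div_iff hQ0, prod_kap]
  have h1 : ((Real.sqrt (s l) : ℝ) : ℂ) ≠ 0 := by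
    exact_mod_cast (Real.sqrt_pos.mpr (hs l)).ne'
  push_cast
  have key : ((Real.sqrt (s l) : ℝ) : ℂ) * (((Real.sqrt (s l) : ℝ) : ℂ))⁻¹ = 1 :=
    mul_inv_cancel₀ h1
  linear_combination (-1 : ℂ) * (γ l (m + 1 + l) * ((((Real.sqrt (s (l + 1)) : ℝ) : ℂ))⁻¹) *
    (∏ x ∈ Finset.Icc 1 (m + 1), (((dd γ l (x + l) : ℝ) : ℂ))⁻¹) *
    (∏ x ∈ Finset.Icc 1 m, ((kap s γ x (l + 1) : ℝ) : ℂ))) * key
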